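/- Let X, Y be Hilbert spaces, A₁₁ : X → X* bounded, coercive with constant c > 0, and with operator norm at most c̄. Let A₁₂ : Y → X* be bounded and set A₂₁ := -A₁₂* (restricted appropriately, i.e., ⟨A₁₂ y, x⟩ = -⟨A₂₁ x, y⟩ for all x ∈ X, y ∈ Y). Then the Schur complement W = -A₂₁ A₁₁⁻¹ A₁₂ is accretive: ⟨W y, y⟩ ≥ (c/c̄²)·‖A₁₂ y‖²_{X*} ≥ 0 for all y ∈ Y. -/

import Mathlib

/-- If A₁₁ is coercive with constant c and has norm at most c̄, and
A₂₁ = -A₁₂* in the sense that ⟨A₁₂ y, x⟩ = -⟨A₂₁ x, y⟩, then the Schur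
complement W = -A₂₁ A₁₁⁻¹ A₁₂ is accretive:
⟨W y, y⟩ ≥ (c/c̄²)‖A₁₂ y‖² ≥ 0. -/
theorem stmt6 {X Y : Type*}
    [NormedAddCommGroup X] [InnerProductSpace ℝ X] [CompleteSpace X]
    [NormedAddCommGroup Y] [InnerProductSpace ℝ Y] [CompleteSpace Y]
    (A11 : X →L[ℝ] StrongDual ℝ X) (c cbar : ℝ) (hc : 0 < c)
    (hcoer : ∀ v : X, c * ‖v‖ ^ 2 ≤ A11 v v) (hbound : ‖A11‖ ≤ cbar)
    (A12 : Y →L[ℝ] StrongDual ℝ X) (A21 : X →L[ℝ] Y)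
    (hadj : ∀ (x : X) (y : Y), A12 y x = -(inner ℝ (A21 x) y : ℝ))
    (Ainv : StrongDual ℝ X →L[ℝ] X)
    (hAinv1 : ∀ f, A11 (Ainv f) = f) (hAinv2 : ∀ v, Ainv (A11 v) = v) :
    ∀ y : Y,
      (c / cbar ^ 2) * ‖A12 y‖ ^ 2 ≤ (inner ℝ (-(A21 (Ainv (A12 y)))) y : ℝ) ∧
      0 ≤ (inner ℝ (-(A21 (Ainv (A12 y)))) y : ℝ) := by
  intro y
  set v : X := Ainv (A12 y) with hv
  have hkey : (inner ℝ (-(A21 v)) y : ℝ) = A12 y v := by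
    rw [hadj v y, inner_neg_left]
  have hAv : A11 v = A12 y := hAinv1 (A12 y)
  have h1 : c * ‖v‖ ^ 2 ≤ (inner ℝ (-(A21 v)) y : ℝ) := by
    rw [hkey, ← hAv]; exact hcoer v
  have h0 : 0 ≤ (inner ℝ (-(A21 v)) y : ℝ) :=
    le_trans (by positivity) h1
  refine ⟨?_, h0⟩
  have hnorm : ‖A12 y‖ ≤ cbar * ‖v‖ := by
    rw [← hAv]
    calc ‖A11 v‖ ≤ ‖A11‖ * ‖v‖ := A11.le_opNorm v
      _ ≤ cbar * ‖v‖ := by gcongr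
  by_cases h0' : ‖A12 y‖ = 0
  · rw [h0']; simpa using h0
  · have hpos : 0 < ‖A12 y‖ := lt_of_le_of_ne (norm_nonneg _) (Ne.symm h0')
    have hcbar : 0 < cbar := by
      by_contra hcb
      push_neg at hcb
      have : cbar * ‖v‖ ≤ 0 := mul_nonpos_of_nonpos_of_nonneg hcb (norm_nonneg v)
      linarith [hnorm.trans this]
    have h2 : ‖A12 y‖ ^ 2 ≤ cbar ^ 2 * ‖v‖ ^ 2 := by
      have := pow_le_pow_left₀ (norm_nonneg _) hnorm 2
      calc ‖A12 y‖ ^ 2 ≤ (cbar * ‖v‖) ^ 2 := this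
        _ = cbar ^ 2 * ‖v‖ ^ 2 := by ring
    calc (c / cbar ^ 2) * ‖A12 y‖ ^ 2 ≤ (c / cbar ^ 2) * (cbar ^ 2 * ‖v‖ ^ 2) := by
          apply mul_le_mul_of_nonneg_left h2 (by positivity)
      _ = c * ‖v‖ ^ 2 := by field_simp
      _ ≤ _ := h1
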